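/- (The ideal curvature tensor in order 4.) In the chart model, define the (1,4)-tensor field iR_4 pointwise (suppressing the point p) by iR_4(x_1,x_2,x_3,x_4) := (∇_{x_1}R)(x_2,x_3)(x_4) + (1/2)[R(T(x_1,x_2),x_3)(x_4) + R(x_2,T(x_1,x_3))(x_4)] − (1/2)[T(R(x_2,x_3)(x_1),x_4) + T((∇_{x_1}T)(x_2,x_3),x_4) + T(T(T(x_2,x_3),x_1),x_4)] + (1/4)[−2(∇_{x_1}T)(T(x_2,x_3),x_4) − (∇_{x_2}T)(T(x_1,x_3),x_4) + (∇_{x_3}T)(T(x_1,x_2),x_4)] + (1/8)[T(T(x_3,x_4),T(x_1,x_2)) − T(T(x_2,x_4),T(x_1,x_3)) + 2T(T(x_2,x_3),T(x_1,x_4))]. Then at every point p ∈ E and for all x_1,…,x_4 ∈ E: (b1) iR_4(x_1,x_2,x_3,x_4) + iR_4(x_1,x_3,x_2,x_4) = 0, and (b3) iR_4(x_1,x_2,x_3,x_4) + iR_4(x_2,x_3,x_1,x_4) + iR_4(x_3,x_1,x_2,x_4) = 0 (the second Bianchi identity in ideal form). -/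

import Mathlib

noncomputable section

/- Chart model of a linear connection with torsion: `E` is a finite-dimensional real
normed vector space and `Γ : E → (E →L[ℝ] E →L[ℝ] E)` a smooth Christoffel map.  Below:
`Tor` is the torsion, `Curv` the curvature (with the sign convention
`R(X,Y)Z = ∇_{[X,Y]}Z − [∇_X,∇_Y]Z`), and `covDer2`, `covDer3` the covariant derivatives
of (1,2)- and (1,3)-tensor fields. -/

variable {E : Type*} [NormedAddCommGroup E] [NormedSpace ℝ E] [FiniteDimensional ℝ E]

/-- The torsion `T(p)(u,v) := Γ(p)(u)(v) − Γ(p)(v)(u)`. -/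
def Tor (Γ : E → (E →L[ℝ] E →L[ℝ] E)) (p u v : E) : E :=
  Γ p u v - Γ p v u

/-- The curvature
`R(p)(u,v)(w) := −(DΓ)(p)(u)(v)(w) + (DΓ)(p)(v)(u)(w) − Γ(p)(u)(Γ(p)(v)(w)) + Γ(p)(v)(Γ(p)(u)(w))`. -/
def Curv (Γ : E → (E →L[ℝ] E →L[ℝ] E)) (p u v w : E) : E :=
  -(fderiv ℝ Γ p u v w) + fderiv ℝ Γ p v u w - Γ p u (Γ p v w) + Γ p v (Γ p u w)

/-- The covariant derivative of a (1,2)-tensor field: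
`(∇A)(p)(x)(z₁,z₂) := (DA)(p)(x)(z₁,z₂) + Γ(p)(x)(A(p)(z₁,z₂)) − A(p)(Γ(p)(x)(z₁),z₂)
− A(p)(z₁,Γ(p)(x)(z₂))`. -/
def covDer2 (Γ : E → (E →L[ℝ] E →L[ℝ] E)) (A : E → E → E → E) (p x z₁ z₂ : E) : E :=
  fderiv ℝ (fun q => A q z₁ z₂) p x + Γ p x (A p z₁ z₂)
    - A p (Γ p x z₁) z₂ - A p z₁ (Γ p x z₂)

/-- The covariant derivative of a (1,3)-tensor field. -/
def covDer3 (Γ : E → (E →L[ℝ] E →L[ℝ] E)) (A : E → E → E → E → E) (p x z₁ z₂ z₃ : E) : E :=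
  fderiv ℝ (fun q => A q z₁ z₂ z₃) p x + Γ p x (A p z₁ z₂ z₃)
    - A p (Γ p x z₁) z₂ z₃ - A p z₁ (Γ p x z₂) z₃ - A p z₁ z₂ (Γ p x z₃)

/-- The symmetrized Christoffel map `Γ̃(p)(u)(v) := (1/2)(Γ(p)(u)(v) + Γ(p)(v)(u))`. -/
def symmGamma (Γ : E → (E →L[ℝ] E →L[ℝ] E)) : E → (E →L[ℝ] E →L[ℝ] E) :=
  fun p => (2 : ℝ)⁻¹ • (Γ p + (Γ p).flip)

/-- The ideal curvature tensor in order 4 (the point `p` is the first argument). -/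
def iR4 (Γ : E → (E →L[ℝ] E →L[ℝ] E)) (p x₁ x₂ x₃ x₄ : E) : E :=
  covDer3 Γ (Curv Γ) p x₁ x₂ x₃ x₄
    + (2 : ℝ)⁻¹ • (Curv Γ p (Tor Γ p x₁ x₂) x₃ x₄ + Curv Γ p x₂ (Tor Γ p x₁ x₃) x₄)
    - (2 : ℝ)⁻¹ • (Tor Γ p (Curv Γ p x₂ x₃ x₁) x₄
        + Tor Γ p (covDer2 Γ (Tor Γ) p x₁ x₂ x₃) x₄
        + Tor Γ p (Tor Γ p (Tor Γ p x₂ x₃) x₁) x₄)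
    + (4 : ℝ)⁻¹ • (-((2 : ℝ) • covDer2 Γ (Tor Γ) p x₁ (Tor Γ p x₂ x₃) x₄)
        - covDer2 Γ (Tor Γ) p x₂ (Tor Γ p x₁ x₃) x₄
        + covDer2 Γ (Tor Γ) p x₃ (Tor Γ p x₁ x₂) x₄)
    + (8 : ℝ)⁻¹ • (Tor Γ p (Tor Γ p x₃ x₄) (Tor Γ p x₁ x₂)
        - Tor Γ p (Tor Γ p x₂ x₄) (Tor Γ p x₁ x₃)
        + (2 : ℝ) • Tor Γ p (Tor Γ p x₂ x₃) (Tor Γ p x₁ x₄))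

set_option linter.unusedSectionVars false in
set_option maxHeartbeats 10000000 in
/-- the ideal order-4 curvature tensor satisfies
(b1) `iR₄(x₁,x₂,x₃,x₄) + iR₄(x₁,x₃,x₂,x₄) = 0` and
(b3) `iR₄(x₁,x₂,x₃,x₄) + iR₄(x₂,x₃,x₁,x₄) + iR₄(x₃,x₁,x₂,x₄) = 0`
(the second Bianchi identity in ideal form). -/
theorem statement14 (Γ : E → (E →L[ℝ] E →L[ℝ] E)) (hΓ : ContDiff ℝ (⊤ : ℕ∞) Γ)
    (p x₁ x₂ x₃ x₄ : E) :
    iR4 Γ p x₁ x₂ x₃ x₄ + iR4 Γ p x₁ x₃ x₂ x₄ = 0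
    ∧ iR4 Γ p x₁ x₂ x₃ x₄ + iR4 Γ p x₂ x₃ x₁ x₄ + iR4 Γ p x₃ x₁ x₂ x₄ = 0 := by
  have hd : Differentiable ℝ Γ := hΓ.differentiable (by simp)
  have hd2 : Differentiable ℝ (fderiv ℝ Γ) :=
    ((hΓ.fderiv_right (m := ((⊤ : ℕ∞) : WithTop ℕ∞)) (by norm_num)).differentiable
      (by simp))
  have dB : ∀ u v : E, DifferentiableAt ℝ (fun q => Γ q u v) p := fun u v =>
    ((hd p).clm_apply (differentiableAt_const u)).clm_apply (differentiableAt_const v)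
  have dA : ∀ u v w : E, DifferentiableAt ℝ (fun q => fderiv ℝ Γ q u v w) p := fun u v w =>
    (((hd2 p).clm_apply (differentiableAt_const u)).clm_apply
      (differentiableAt_const v)).clm_apply (differentiableAt_const w)
  have dC : ∀ u v w : E, DifferentiableAt ℝ (fun q => Γ q u (Γ q v w)) p := fun u v w =>
    ((hd p).clm_apply (differentiableAt_const u)).clm_apply (dB v w)
  have e1 : ∀ u v x : E, fderiv ℝ (fun q => Γ q u v) p x = fderiv ℝ Γ p x u v := by
    intro u v x
    rw [fderiv_clm_apply ((hd p).clm_apply (differentiableAt_const u)) (differentiableAt_const v),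
      fderiv_clm_apply (hd p) (differentiableAt_const u)]
    simp
  have e0 : ∀ u x : E, fderiv ℝ (fun q => Γ q u) p x = fderiv ℝ Γ p x u := by
    intro u x
    rw [fderiv_clm_apply (hd p) (differentiableAt_const u)]
    simp
  have e2 : ∀ u v w x : E,
      fderiv ℝ (fun q => fderiv ℝ Γ q u v w) p x = fderiv ℝ (fderiv ℝ Γ) p x u v w := by
    intro u v w x
    rw [fderiv_clm_apply (((hd2 p).clm_apply (differentiableAt_const u)).clm_apply
        (differentiableAt_const v)) (differentiableAt_const w),
      fderiv_clm_apply ((hd2 p).clm_apply (differentiableAt_const u))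
        (differentiableAt_const v),
      fderiv_clm_apply (hd2 p) (differentiableAt_const u)]
    simp
  have e3 : ∀ u v w x : E, fderiv ℝ (fun q => Γ q u (Γ q v w)) p x
      = fderiv ℝ Γ p x u (Γ p v w) + Γ p u (fderiv ℝ Γ p x v w) := by
    intro u v w x
    rw [fderiv_clm_apply ((hd p).clm_apply (differentiableAt_const u)) (dB v w)]
    simp [e0, e1]
    abel
  have hTd : ∀ u v x : E, fderiv ℝ (fun q => Tor Γ q u v) p x
      = fderiv ℝ Γ p x u v - fderiv ℝ Γ p x v u := by
    intro u v x
    simp only [Tor]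
    rw [fderiv_fun_sub (dB u v) (dB v u)]
    simp [e1]
  have hCd : ∀ u v w x : E, fderiv ℝ (fun q => Curv Γ q u v w) p x
      = -(fderiv ℝ (fderiv ℝ Γ) p x u v w) + fderiv ℝ (fderiv ℝ Γ) p x v u w
        - (fderiv ℝ Γ p x u (Γ p v w) + Γ p u (fderiv ℝ Γ p x v w))
        + (fderiv ℝ Γ p x v (Γ p u w) + Γ p v (fderiv ℝ Γ p x u w)) := by
    intro u v w x
    simp only [Curv]
    rw [fderiv_fun_add (((dA u v w).fun_neg.fun_add (dA v u w)).fun_sub (dC u v w)) (dC v u w),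
      fderiv_fun_sub ((dA u v w).fun_neg.fun_add (dA v u w)) (dC u v w),
      fderiv_fun_add (dA u v w).fun_neg (dA v u w), fderiv_fun_neg]
    simp [e2, e3]
  have hsym : IsSymmSndFDerivAt ℝ Γ p :=
    hΓ.contDiffAt.isSymmSndFDerivAt
      (le_trans (by norm_num) (WithTop.coe_le_coe.2 (le_top : (2:ℕ∞) ≤ ⊤)))
  constructor
  · simp only [iR4, covDer3, covDer2]
    simp only [hCd, hTd]
    simp only [Curv, Tor]
    simp only [map_sub, map_add, map_neg, ContinuousLinearMap.sub_apply,
      ContinuousLinearMap.add_apply, ContinuousLinearMap.neg_apply]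
    module
  · simp only [iR4, covDer3, covDer2]
    simp only [hCd, hTd]
    simp only [Curv, Tor]
    simp only [map_sub, map_add, map_neg, ContinuousLinearMap.sub_apply,
      ContinuousLinearMap.add_apply, ContinuousLinearMap.neg_apply]
    simp only [hsym.eq x₂ x₁, hsym.eq x₃ x₁, hsym.eq x₃ x₂]
    module
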